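/- Let p_1 ≥ ... ≥ p_k ≥ 1 and q_1 ≥ ... ≥ q_k ≥ 1 be two different k-tuples with k ≥ 3 and equal sums Σp_i = Σq_i. Then the complete k-partite graphs K_{p_1,...,p_k} and K_{q_1,...,q_k} are not switching equivalent: there is no subset U of vertices of K_{p_1,...,p_k} such that switching with respect to U yields a graph isomorphic to K_{q_1,...,q_k}. -/

import Mathlib

open SimpleGraph

/-- Seidel switching of a graph `G` with respect to a vertex subset `U`: adjacency
inside `U` and inside its complement is unchanged, while adjacency between `U` and
its complement is complemented. -/
def switch {V : Type*} (G : SimpleGraph V) (U : Set V) : SimpleGraph V where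
  Adj u v := u ≠ v ∧
    (((u ∈ U ↔ v ∈ U) ∧ G.Adj u v) ∨ (¬(u ∈ U ↔ v ∈ U) ∧ ¬ G.Adj u v))
  symm := by
    constructor
    rintro u v ⟨h1, h2⟩
    refine ⟨h1.symm, ?_⟩
    rcases h2 with ⟨ha, hb⟩ | ⟨ha, hb⟩
    · exact Or.inl ⟨ha.symm, hb.symm⟩
    · exact Or.inr ⟨fun c => ha c.symm, fun c => hb c.symm⟩
  loopless := ⟨fun _ h => h.1 rfl⟩

/-- The complete multipartite graph with parts of sizes `p 0, ..., p (k-1)`. -/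
def completeMultipartite {k : ℕ} (p : Fin k → ℕ) : SimpleGraph (Σ i : Fin k, Fin (p i)) where
  Adj u v := u.1 ≠ v.1
  symm := ⟨fun _ _ h => h.symm⟩
  loopless := ⟨fun _ h => h rfl⟩

/-- The parity of the number of edges of `G` among the three pairs from `{u, v, w}`
is odd. -/
def oddTriple {V : Type*} (G : SimpleGraph V) (u v w : V) : Prop :=
  Xor' (Xor' (G.Adj u v) (G.Adj u w)) (G.Adj v w)

lemma switch_adj {V : Type*} (G : SimpleGraph V) (U : Set V) (u v : V) :
    (switch G U).Adj u v ↔ u ≠ v ∧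
      (((u ∈ U ↔ v ∈ U) ∧ G.Adj u v) ∨ (¬(u ∈ U ↔ v ∈ U) ∧ ¬ G.Adj u v)) := Iff.rfl

lemma cmp_adj {k : ℕ} (p : Fin k → ℕ) (u v : Σ i : Fin k, Fin (p i)) :
    (completeMultipartite p).Adj u v ↔ u.1 ≠ v.1 := Iff.rfl

set_option maxHeartbeats 1000000 in
/-- Switching preserves the parity of each triple. -/
lemma oddTriple_switch {V : Type*} (G : SimpleGraph V) (U : Set V) {u v w : V}
    (huv : u ≠ v) (huw : u ≠ w) (hvw : v ≠ w) :
    oddTriple (switch G U) u v w ↔ oddTriple G u v w := by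
  simp only [oddTriple, switch_adj, huv, huw, hvw, ne_eq, not_false_iff, true_and]
  by_cases hu : u ∈ U <;> by_cases hv : v ∈ U <;> by_cases hw : w ∈ U <;>
    by_cases a1 : G.Adj u v <;> by_cases a2 : G.Adj u w <;> by_cases a3 : G.Adj v w <;>
    simp_all [Xor']

/-- In a complete multipartite graph, a triple is odd iff its vertices lie in three
distinct parts. -/
lemma oddTriple_cmp {k : ℕ} (p : Fin k → ℕ) (u v w : Σ i : Fin k, Fin (p i)) :
    oddTriple (completeMultipartite p) u v w ↔
      (u.1 ≠ v.1 ∧ u.1 ≠ w.1 ∧ v.1 ≠ w.1) := by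
  simp only [oddTriple, cmp_adj, Xor']
  by_cases h1 : u.1 = v.1 <;> by_cases h2 : u.1 = w.1 <;> by_cases h3 : v.1 = w.1 <;>
    simp_all

/-- An isomorphism preserves odd triples. -/
lemma oddTriple_map {V W : Type*} {G : SimpleGraph V} {H : SimpleGraph W}
    (φ : G ≃g H) (u v w : V) :
    oddTriple H (φ u) (φ v) (φ w) ↔ oddTriple G u v w := by
  simp only [oddTriple, φ.map_adj_iff]

/-- In a complete multipartite graph with at least three nonempty parts, two distinct
vertices are in the same part iff every triple containing them is even. -/
lemma samePart_iff {k : ℕ} (hk : 3 ≤ k) (p : Fin k → ℕ) (hp1 : ∀ i, 1 ≤ p i)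
    {u v : Σ i : Fin k, Fin (p i)} (huv : u ≠ v) :
    u.1 = v.1 ↔ ∀ w, w ≠ u → w ≠ v →
      ¬ oddTriple (completeMultipartite p) u v w := by
  constructor
  · intro h w _ _ hodd
    rw [oddTriple_cmp] at hodd
    exact hodd.1 h
  · intro h
    by_contra hne
    obtain ⟨i, hi⟩ : ∃ i : Fin k, i ∉ ({u.1, v.1} : Finset (Fin k)) := by
      have hcard : ({u.1, v.1} : Finset (Fin k)).card ≤ 2 :=
        (Finset.card_insert_le _ _).trans (by simp)
      have : (({u.1, v.1} : Finset (Fin k))ᶜ).Nonempty := by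
        rw [← Finset.card_pos, Finset.card_compl, Fintype.card_fin]
        omega
      obtain ⟨i, hi⟩ := this
      exact ⟨i, Finset.mem_compl.mp hi⟩
    simp only [Finset.mem_insert, Finset.mem_singleton, not_or] at hi
    refine h ⟨i, ⟨0, hp1 i⟩⟩ (fun e => hi.1 (congrArg Sigma.fst e))
      (fun e => hi.2 (congrArg Sigma.fst e)) ?_
    rw [oddTriple_cmp]
    exact ⟨hne, fun e => hi.1 e.symm, fun e => hi.2 e.symm⟩

/-- Two complete `k`-partite graphs, `k ≥ 3`, with different (sorted) part-size
tuples of equal sum are not switching equivalent: no switching of `K_{p_1,...,p_k}`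
is isomorphic to `K_{q_1,...,q_k}`. -/
theorem completeMultipartite_not_switching_equivalent {k : ℕ} (hk : 3 ≤ k)
    (p q : Fin k → ℕ) (hp : Antitone p) (hq : Antitone q)
    (hp1 : ∀ i, 1 ≤ p i) (hq1 : ∀ i, 1 ≤ q i) (hne : p ≠ q)
    (hsum : ∑ i, p i = ∑ i, q i) :
    ¬ ∃ U : Set (Σ i : Fin k, Fin (p i)),
        Nonempty (switch (completeMultipartite p) U ≃g completeMultipartite q) := by
  rintro ⟨U, ⟨φ⟩⟩
  -- transporting odd triples through the isomorphism and the switching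
  have trans : ∀ u v w : (Σ i : Fin k, Fin (p i)), u ≠ v → u ≠ w → v ≠ w →
      (oddTriple (completeMultipartite q) (φ u) (φ v) (φ w) ↔
        oddTriple (completeMultipartite p) u v w) := fun u v w h1 h2 h3 =>
    (oddTriple_map φ u v w).trans (oddTriple_switch _ _ h1 h2 h3)
  -- the isomorphism preserves "being in the same part"
  have key : ∀ u v : (Σ i : Fin k, Fin (p i)), u ≠ v →
      (u.1 = v.1 ↔ (φ u).1 = (φ v).1) := by
    intro u v huv
    have hφuv : (φ u) ≠ (φ v) := fun e => huv (φ.toEquiv.injective e)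
    rw [samePart_iff hk p hp1 huv, samePart_iff hk q hq1 hφuv]
    constructor
    · intro h w' hwu hwv hodd
      have e : φ (φ.symm w') = w' := φ.apply_symm_apply w'
      have hwu' : φ.symm w' ≠ u := fun hh => hwu (by rw [← e, hh])
      have hwv' : φ.symm w' ≠ v := fun hh => hwv (by rw [← e, hh])
      apply h (φ.symm w') hwu' hwv'
      rw [← trans u v _ huv (Ne.symm hwu') (Ne.symm hwv'), e]
      exact hodd
    · intro h w hwu hwv hodd
      apply h (φ w) (fun e => hwu (φ.toEquiv.injective e))
        (fun e => hwv (φ.toEquiv.injective e))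
      rw [trans u v w huv (Ne.symm hwu) (Ne.symm hwv)]
      exact hodd
  -- the induced permutation of parts
  let base : Fin k → (Σ i : Fin k, Fin (p i)) := fun i => ⟨i, ⟨0, hp1 i⟩⟩
  let σ : Fin k → Fin k := fun i => (φ (base i)).1
  have hfiber : ∀ v : (Σ i : Fin k, Fin (p i)), (φ v).1 = σ v.1 := by
    intro v
    by_cases hb : v = base v.1
    · rw [hb]
    · exact (key v (base v.1) hb).mp rfl
  have hinj : Function.Injective σ := by
    intro i j hij
    by_contra hne'
    have hb : base i ≠ base j := fun e => hne' (congrArg Sigma.fst e)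
    exact hne' ((key _ _ hb).mpr hij)
  have hbij : Function.Bijective σ := Finite.injective_iff_bijective.mp hinj
  -- each part maps to a part of the same size
  have fiberEquivP : ∀ i : Fin k, Fin (p i) ≃ {v : Σ j : Fin k, Fin (p j) // v.1 = i} := by
    intro i
    refine Equiv.ofBijective (fun x => ⟨⟨i, x⟩, rfl⟩) ⟨?_, ?_⟩
    · intro a b h
      have := congrArg Subtype.val h
      simpa using this
    · rintro ⟨⟨j, x⟩, (h : j = i)⟩
      subst h
      exact ⟨x, rfl⟩
  have fiberEquivQ : ∀ i : Fin k, Fin (q i) ≃ {v : Σ j : Fin k, Fin (q j) // v.1 = i} := by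
    intro i
    refine Equiv.ofBijective (fun x => ⟨⟨i, x⟩, rfl⟩) ⟨?_, ?_⟩
    · intro a b h
      have := congrArg Subtype.val h
      simpa using this
    · rintro ⟨⟨j, x⟩, (h : j = i)⟩
      subst h
      exact ⟨x, rfl⟩
  have hcard : ∀ i, p i = q (σ i) := by
    intro i
    have e2 : {v : Σ j : Fin k, Fin (p j) // v.1 = i} ≃
        {w : Σ j : Fin k, Fin (q j) // w.1 = σ i} := by
      refine Equiv.ofBijective (fun a => ⟨φ a.1, by rw [hfiber, a.2]⟩) ⟨?_, ?_⟩
      · intro a b h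
        exact Subtype.ext (φ.toEquiv.injective (congrArg Subtype.val h))
      · rintro ⟨w, hw⟩
        refine ⟨⟨φ.symm w, ?_⟩, Subtype.ext (φ.apply_symm_apply w)⟩
        apply hinj
        rw [← hfiber, φ.apply_symm_apply]
        exact hw
    have := Fintype.card_congr (((fiberEquivP i).trans e2).trans (fiberEquivQ (σ i)).symm)
    simpa using this
  -- conclude `p = q` using antitonicity, contradicting `hne`
  have hm : (Finset.univ.val.map p) = (Finset.univ.val.map q) := by
    have hcomp : p = q ∘ σ := funext hcard
    rw [hcomp, ← Multiset.map_map]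
    congr 1
    have := Finset.map_univ_equiv (Equiv.ofBijective σ hbij)
    calc Finset.univ.val.map σ
        = (Finset.univ.map (Equiv.ofBijective σ hbij).toEmbedding).val := by
          rw [Finset.map_val]; rfl
      _ = Finset.univ.val := by rw [this]
  rw [Fin.univ_val_map, Fin.univ_val_map] at hm
  have hperm : (List.ofFn p).Perm (List.ofFn q) := Quotient.exact hm
  haveI : IsAntisymm ℕ (· ≥ ·) := ⟨fun a b h1 h2 => le_antisymm h2 h1⟩
  have hsorted : ∀ f : Fin k → ℕ, Antitone f → (List.ofFn f).Pairwise (· ≥ ·) := by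
    intro f hf
    rw [List.pairwise_ofFn]
    intro i j hij
    exact hf hij.le
  have : List.ofFn p = List.ofFn q :=
    List.Perm.eq_of_pairwise (fun a b _ _ h1 h2 => le_antisymm h2 h1) (hsorted p hp) (hsorted q hq) hperm
  exact hne (List.ofFn_injective this)
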